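/- If A ⊆ X is N-step control invariant, then from any initial state x_0 ∈ A there exists an infinite admissible control sequence whose trajectory remains in X for all time and visits A infinitely often (with gaps between consecutive visits at most N). -/

import Mathlib

open Set

variable {α β : Type*}

/-- `x` is an equilibrium state: it lies in `X` and can be held fixed by some admissible control. -/
def IsEquilibrium (f : α → β → α) (X : Set α) (U : Set β) (x : α) : Prop :=
  x ∈ X ∧ ∃ u ∈ U, f x u = x

/-- Infinite-time backward-reachable set of the equilibrium set `S`:
states in `X` from which some admissible trajectory staying in `X` reaches an equilibrium. -/
def BackReach (f : α → β → α) (X : Set α) (U : Set β) : Set α :=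
  {x0 | x0 ∈ X ∧ ∃ (k : ℕ) (x : ℕ → α) (u : ℕ → β),
    x 0 = x0 ∧ (∀ i ≤ k, x (i + 1) = f (x i) (u i)) ∧
    (∀ i ≤ k, x i ∈ X) ∧ (∀ i ≤ k, u i ∈ U) ∧
    IsEquilibrium f X U (x (k + 1))}

/-- Classic control invariance of `A`. -/
def CtrlInv (f : α → β → α) (U : Set β) (A : Set α) : Prop :=
  ∀ x ∈ A, ∃ u ∈ U, f x u ∈ A

/-- `N`-step control invariance of `A ⊆ X`. -/
def NStepInv (f : α → β → α) (X : Set α) (U : Set β) (N : ℕ) (A : Set α) : Prop :=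
  ∀ x0 ∈ A, ∃ (k : ℕ) (x : ℕ → α) (u : ℕ → β), 1 ≤ k ∧ k ≤ N ∧
    x 0 = x0 ∧ (∀ i < k, x (i + 1) = f (x i) (u i)) ∧
    (∀ i < k, x i ∈ X) ∧ (∀ i < k, u i ∈ U) ∧ x k ∈ A

/-- From any state of an `N`-step control invariant set `A ⊆ X` there is an infinite
admissible trajectory staying in `X` and visiting `A` with gaps at most `N`. -/
theorem nStepInv_infinitely_visits (f : α → β → α) (X : Set α) (U : Set β) (A : Set α)
    (N : ℕ) (hAX : A ⊆ X) (hA : NStepInv f X U N A) :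
    ∀ x0 ∈ A, ∃ (x : ℕ → α) (u : ℕ → β), x 0 = x0 ∧
      (∀ t, x (t + 1) = f (x t) (u t)) ∧ (∀ t, x t ∈ X) ∧ (∀ t, u t ∈ U) ∧
      (∀ t, ∃ s, t < s ∧ s ≤ t + N ∧ x s ∈ A) := by
  classical
  intro x0 hx0
  choose K Xs Us hK1 hKN h0 hdyn hX hU hend using hA
  -- the state machine: current anchor point of `A` together with position inside the segment
  let St := {a : α // a ∈ A} × ℕ
  let nxt : {a : α // a ∈ A} → {a : α // a ∈ A} :=
    fun a => ⟨Xs a.1 a.2 (K a.1 a.2), hend a.1 a.2⟩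
  let step : St → St := fun p =>
    if p.2 + 1 < K p.1.1 p.1.2 then (p.1, p.2 + 1) else (nxt p.1, 0)
  let T : ℕ → St := fun t => step^[t] (⟨x0, hx0⟩, 0)
  have hTsucc : ∀ t, T (t + 1) = step (T t) := fun t =>
    Function.iterate_succ_apply' _ _ _
  have hinv : ∀ t, (T t).2 < K (T t).1.1 (T t).1.2 := by
    intro t
    induction t with
    | zero => exact hK1 x0 hx0
    | succ n ih =>
      rw [hTsucc]
      by_cases h : (T n).2 + 1 < K (T n).1.1 (T n).1.2
      · simpa [step, h] using h
      · simp only [step, h, if_false]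
        exact hK1 _ _
  let x : ℕ → α := fun t => Xs (T t).1.1 (T t).1.2 (T t).2
  let u : ℕ → β := fun t => Us (T t).1.1 (T t).1.2 (T t).2
  -- key jump lemma: from position `j` with `j + d + 1 = K`, in `d+1` steps we reset
  have hjump : ∀ (d : ℕ) (p : St), p.2 + d + 1 = K p.1.1 p.1.2 →
      step^[d + 1] p = (nxt p.1, 0) := by
    intro d
    induction d with
    | zero =>
      intro p hp
      have h : ¬ (p.2 + 1 < K p.1.1 p.1.2) := by omega
      simp [step, h]
    | succ d ih =>
      intro p hp
      have h : p.2 + 1 < K p.1.1 p.1.2 := by omega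
      have hstep : step p = (p.1, p.2 + 1) := by simp [step, h]
      have : step^[d + 1 + 1] p = step^[d + 1] (step p) := by
        rw [Function.iterate_succ_apply]
      rw [this, hstep, ih (p.1, p.2 + 1) (by simpa using by omega)]
  refine ⟨x, u, ?_, ?_, ?_, ?_, ?_⟩
  · exact h0 x0 hx0
  · intro t
    by_cases h : (T t).2 + 1 < K (T t).1.1 (T t).1.2
    · have hT : T (t + 1) = ((T t).1, (T t).2 + 1) := by rw [hTsucc]; simp [step, h]
      show Xs (T (t+1)).1.1 (T (t+1)).1.2 (T (t+1)).2 = _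
      rw [hT]
      exact hdyn _ _ _ (hinv t)
    · have hT : T (t + 1) = (nxt (T t).1, 0) := by rw [hTsucc]; simp [step, h]
      have hk : (T t).2 + 1 = K (T t).1.1 (T t).1.2 := by
        have := hinv t; omega
      show Xs (T (t+1)).1.1 (T (t+1)).1.2 (T (t+1)).2 = _
      rw [hT]
      have : Xs (nxt (T t).1).1 (nxt (T t).1).2 0 = (nxt (T t).1).1 := h0 _ _
      rw [this]
      show Xs (T t).1.1 (T t).1.2 (K (T t).1.1 (T t).1.2) = _
      rw [← hk]
      exact hdyn _ _ _ (hinv t)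
  · intro t
    exact hX _ _ _ (hinv t)
  · intro t
    exact hU _ _ _ (hinv t)
  · intro t
    set a := (T t).1 with ha
    set j := (T t).2 with hj
    have hjK : j < K a.1 a.2 := hinv t
    obtain ⟨d, hd⟩ : ∃ d, j + d + 1 = K a.1 a.2 := ⟨K a.1 a.2 - j - 1, by omega⟩
    refine ⟨t + (d + 1), by omega, ?_, ?_⟩
    · have : d + 1 ≤ N := by
        have := hKN a.1 a.2; omega
      omega
    · have hTs : T (t + (d + 1)) = (nxt a, 0) := by
        have : T (t + (d + 1)) = step^[d + 1] (T t) := by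
          show step^[t + (d+1)] _ = _
          rw [add_comm t (d+1), Function.iterate_add_apply]
        rw [this]
        exact hjump d (T t) (by rw [← ha, ← hj]; exact hd)
      show Xs (T (t + (d+1))).1.1 (T (t + (d+1))).1.2 (T (t + (d+1))).2 ∈ A
      rw [hTs]
      have : Xs (nxt a).1 (nxt a).2 0 = (nxt a).1 := h0 _ _
      rw [this]
      exact (nxt a).2
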